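/- arXiv:2105.06561 — 5 statements merged into one kernel-verified Lean document; each statement's English description precedes it below -/
import Mathlib

section
/- Let v be a swap-equilibrium on G, let S be a set of edges whose deletion makes v unstable (i.e., v is not a swap-equilibrium on G − S), and let A be any set of edges of G each joining two vertices occupied by agents of the same type. Then v is also not a swap-equilibrium on G − (S ∪ A). -/
open SimpleGraph

variable {V : Type*}

/-- Utility of the agent occupying vertex `v` in graph `H` under type assignment `τ`:
the fraction of same-type agents among occupied neighbors (0 if no neighbors). -/
noncomputable def utility (H : SimpleGraph V) (τ : V → Bool) (v : V) : ℚ := by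
  classical
  exact if H.neighborSet v = ∅ then 0
    else ((H.neighborSet v ∩ {w | τ w = τ v}).ncard : ℚ) / ((H.neighborSet v).ncard : ℚ)

lemma utility_nonneg (H : SimpleGraph V) (τ : V → Bool) (v : V) : 0 ≤ utility H τ v := by
  unfold utility
  split
  · exact le_refl 0
  · positivity

lemma utility_le_of_del_same [Fintype V] (H H' : SimpleGraph V) (τ : V → Bool) (v : V)
    (hsub : H'.neighborSet v ⊆ H.neighborSet v)
    (hrem : ∀ w ∈ H.neighborSet v, w ∉ H'.neighborSet v → τ w = τ v) :
    utility H' τ v ≤ utility H τ v := by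
  classical
  set N := H.neighborSet v with hN
  set N' := H'.neighborSet v with hN'
  by_cases hne : N' = ∅
  · calc utility H' τ v = 0 := by unfold utility; rw [← hN', if_pos hne]
    _ ≤ utility H τ v := utility_nonneg _ _ _
  · have hNne : N ≠ ∅ := fun h => hne (Set.eq_empty_of_subset_empty (h ▸ hsub))
    have hfinN : N.Finite := Set.toFinite _
    have hfinN' : N'.Finite := Set.toFinite _
    have hdiff : (N ∩ {w | τ w = τ v}) \ (N' ∩ {w | τ w = τ v}) = N \ N' := by
      ext x
      simp only [Set.mem_diff, Set.mem_inter_iff, Set.mem_setOf_eq, not_and]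
      constructor
      · rintro ⟨⟨hxN, hxT⟩, h2⟩
        exact ⟨hxN, fun hxN' => h2 hxN' hxT⟩
      · rintro ⟨hxN, hxN'⟩
        exact ⟨⟨hxN, hrem x hxN hxN'⟩, fun h => (hxN' h).elim⟩
    have hsubT : N' ∩ {w | τ w = τ v} ⊆ N ∩ {w | τ w = τ v} :=
      Set.inter_subset_inter_left _ hsub
    have h1 : (N \ N').ncard + N'.ncard = N.ncard :=
      Set.ncard_diff_add_ncard_of_subset hsub hfinN
    have h2 : (N \ N').ncard + (N' ∩ {w | τ w = τ v}).ncard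
        = (N ∩ {w | τ w = τ v}).ncard := by
      rw [← hdiff]
      exact Set.ncard_diff_add_ncard_of_subset hsubT (hfinN.inter_of_left _)
    have hst : (N' ∩ {w | τ w = τ v}).ncard ≤ N'.ncard :=
      Set.ncard_le_ncard Set.inter_subset_left hfinN'
    have ht'pos : 0 < N'.ncard := Set.ncard_pos hfinN' |>.mpr (Set.nonempty_iff_ne_empty.mpr hne)
    have htpos : 0 < N.ncard := lt_of_lt_of_le ht'pos (Set.ncard_le_ncard hsub hfinN)
    unfold utility
    rw [← hN, ← hN', if_neg hne, if_neg hNne]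
    rw [div_le_div_iff₀ (by exact_mod_cast ht'pos) (by exact_mod_cast htpos)]
    have c1 : ((N \ N').ncard : ℚ) + N'.ncard = N.ncard := by exact_mod_cast h1
    have c2 : ((N \ N').ncard : ℚ) + (N' ∩ {w | τ w = τ v}).ncard
        = (N ∩ {w | τ w = τ v}).ncard := by exact_mod_cast h2
    have c3 : ((N' ∩ {w | τ w = τ v}).ncard : ℚ) ≤ N'.ncard := by exact_mod_cast hst
    have c4 : (0:ℚ) ≤ ((N \ N').ncard : ℚ) := by positivity
    nlinarith

lemma utility_le_of_del_opp [Fintype V] (H H' : SimpleGraph V) (τ : V → Bool) (v : V)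
    (hsub : H'.neighborSet v ⊆ H.neighborSet v)
    (hrem : ∀ w ∈ H.neighborSet v, w ∉ H'.neighborSet v → τ w ≠ τ v) :
    utility H τ v ≤ utility H' τ v := by
  classical
  set N := H.neighborSet v with hN
  set N' := H'.neighborSet v with hN'
  by_cases hNne : N = ∅
  · have hne : N' = ∅ := Set.eq_empty_of_subset_empty (hNne ▸ hsub)
    unfold utility; rw [← hN, ← hN', if_pos hne, if_pos hNne]
  · have hfinN : N.Finite := Set.toFinite _
    have hfinN' : N'.Finite := Set.toFinite _
    have hinter : N ∩ {w | τ w = τ v} = N' ∩ {w | τ w = τ v} := by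
      ext x
      simp only [Set.mem_inter_iff, Set.mem_setOf_eq]
      constructor
      · rintro ⟨hxN, hxT⟩
        refine ⟨?_, hxT⟩
        by_contra hxN'
        exact hrem x hxN hxN' hxT
      · rintro ⟨hxN', hxT⟩
        exact ⟨hsub hxN', hxT⟩
    by_cases hne : N' = ∅
    · have hzero : N ∩ {w | τ w = τ v} = ∅ := by
        rw [hinter, hne]; simp
      unfold utility
      rw [← hN, ← hN', if_pos hne, if_neg hNne, hzero]
      simp
    · have ht'pos : 0 < N'.ncard := Set.ncard_pos hfinN' |>.mpr (Set.nonempty_iff_ne_empty.mpr hne)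
      have htle : N'.ncard ≤ N.ncard := Set.ncard_le_ncard hsub hfinN
      unfold utility
      rw [← hN, ← hN', if_neg hne, if_neg hNne, hinter]
      apply div_le_div_of_nonneg_left (by positivity) (by exact_mod_cast ht'pos)
        (by exact_mod_cast htle)

/-- The type function after the agents on vertices `i` and `j` exchange their vertices. -/
noncomputable def swapAt (τ : V → Bool) (i j : V) : V → Bool := fun v => by
  classical
  exact if v = i then τ j else if v = j then τ i else τ v

/-- The swap of the (distinct-type) agents on `i` and `j` strictly increases both utilities. -/
def ProfitableSwap (H : SimpleGraph V) (τ : V → Bool) (i j : V) : Prop :=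
  τ i ≠ τ j ∧
  utility H τ i < utility H (swapAt τ i j) j ∧
  utility H τ j < utility H (swapAt τ i j) i

/-- Swap-equilibrium: no profitable swap exists. -/
def IsSwapEq (H : SimpleGraph V) (τ : V → Bool) : Prop :=
  ∀ i j : V, ¬ ProfitableSwap H τ i j

/-- If deleting the edges in `S` makes the swap-equilibrium `τ` unstable, then additionally
deleting any set `A` of edges of `G` joining two vertices occupied by agents of the same
type keeps it unstable. -/
theorem not_swapEq_deleteEdges_union [Fintype V] (G : SimpleGraph V) (τ : V → Bool)
    (S A : Set (Sym2 V))
    (heq : IsSwapEq G τ)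
    (hunstable : ¬ IsSwapEq (G.deleteEdges S) τ)
    (hA : ∀ u w : V, s(u, w) ∈ A → s(u, w) ∈ G.edgeSet ∧ τ u = τ w) :
    ¬ IsSwapEq (G.deleteEdges (S ∪ A)) τ := by
  classical
  unfold IsSwapEq ProfitableSwap at hunstable ⊢
  push_neg at hunstable
  obtain ⟨i, j, hij, h1, h2⟩ := hunstable
  set H := G.deleteEdges S with hH
  set H' := G.deleteEdges (S ∪ A) with hH'
  set σ := swapAt τ i j with hσ
  have hji : i ≠ j := fun h => hij (h ▸ rfl)
  have hsub : ∀ v, H'.neighborSet v ⊆ H.neighborSet v := by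
    intro v w hw
    simp only [mem_neighborSet, hH, hH', deleteEdges_adj, Set.mem_union] at *
    tauto
  have hremA : ∀ v w, w ∈ H.neighborSet v → w ∉ H'.neighborSet v →
      s(v, w) ∈ A ∧ G.Adj v w := by
    intro v w hw hw'
    simp only [mem_neighborSet, hH, hH', deleteEdges_adj, Set.mem_union, not_and, not_not,
      not_or] at hw hw'
    rcases hw with ⟨hadj, hS⟩
    exact ⟨hw' hadj hS, hadj⟩
  have hσj : σ j = τ i := by
    rw [hσ]; unfold swapAt
    rw [if_neg (Ne.symm hji), if_pos rfl]
  have hσi : σ i = τ j := by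
    rw [hσ]; unfold swapAt; rw [if_pos rfl]
  have hσw : ∀ w, w ≠ i → w ≠ j → σ w = τ w := by
    intro w hwi hwj
    rw [hσ]; unfold swapAt; rw [if_neg hwi, if_neg hwj]
  intro hcon
  refine hcon i j ⟨hij, ?_, ?_⟩
  · calc utility H' τ i ≤ utility H τ i := by
          refine utility_le_of_del_same H H' τ i (hsub i) (fun w hw hw' => ?_)
          obtain ⟨hAw, _⟩ := hremA i w hw hw'
          exact ((hA i w hAw).2).symm
      _ < utility H σ j := h1
      _ ≤ utility H' σ j := by
          refine utility_le_of_del_opp H H' σ j (hsub j) (fun w hw hw' => ?_)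
          obtain ⟨hAw, hadj⟩ := hremA j w hw hw'
          have hτw : τ j = τ w := (hA j w hAw).2
          have hwi : w ≠ i := fun h => hij ((hτw.trans (h ▸ rfl)).symm)
          have hwj : w ≠ j := hadj.ne'
          rw [hσw w hwi hwj, hσj, ← hτw]
          exact fun h => hij h.symm
  · calc utility H' τ j ≤ utility H τ j := by
          refine utility_le_of_del_same H H' τ j (hsub j) (fun w hw hw' => ?_)
          obtain ⟨hAw, _⟩ := hremA j w hw hw'
          exact ((hA j w hAw).2).symm
      _ < utility H σ i := h2
      _ ≤ utility H' σ i := by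
          refine utility_le_of_del_opp H H' σ i (hsub i) (fun w hw hw' => ?_)
          obtain ⟨hAw, hadj⟩ := hremA i w hw hw'
          have hτw : τ i = τ w := (hA i w hAw).2
          have hwj : w ≠ j := fun h => hij (hτw.trans (h ▸ rfl))
          have hwi : w ≠ i := hadj.ne'
          rw [hσw w hwi hwj, hσi, ← hτw]
          exact hij
end

section
/- In a Schelling game on a complete graph (clique) G with |T1| ≥ 2 and |T2| ≥ 2, every swap-equilibrium has edge-robustness zero: for every assignment v there exists a single edge e of G such that v is not a swap-equilibrium on G − {e}. -/
open SimpleGraph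

variable {V : Type*}

/-- On a clique with at least two agents of each type, every assignment (in particular
every swap-equilibrium) has edge-robustness zero: some single edge deletion makes it
unstable. -/
theorem clique_edge_robustness_zero [Fintype V] (τ : V → Bool)
    (h1 : 2 ≤ {v : V | τ v = true}.ncard)
    (h2 : 2 ≤ {v : V | τ v = false}.ncard) :
    ∃ e ∈ (⊤ : SimpleGraph V).edgeSet,
      ¬ IsSwapEq ((⊤ : SimpleGraph V).deleteEdges {e}) τ := by
  classical
  obtain ⟨a, a', ha, ha', haa'⟩ :=
    (Set.one_lt_ncard_iff (s := {v : V | τ v = true})).mp (by omega)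
  obtain ⟨b, b', hb, hb', hbb'⟩ :=
    (Set.one_lt_ncard_iff (s := {v : V | τ v = false})).mp (by omega)
  simp only [Set.mem_setOf_eq] at ha ha' hb hb' ⊢
  have hba : b ≠ a := by rintro rfl; simp [ha] at hb
  have hba' : b ≠ a' := by rintro rfl; simp [ha'] at hb
  refine ⟨s(a, a'), by simpa using haa', ?_⟩
  intro hEq
  apply hEq a b
  set H := (⊤ : SimpleGraph V).deleteEdges {s(a, a')} with hHdef
  have hNa : H.neighborSet a = {a, a'}ᶜ := by
    ext w
    simp only [hHdef, SimpleGraph.mem_neighborSet, SimpleGraph.deleteEdges_adj,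
      SimpleGraph.top_adj, Set.mem_singleton_iff, Sym2.congr_right, Set.mem_compl_iff,
      Set.mem_insert_iff, Set.mem_singleton_iff]
    constructor
    · rintro ⟨hw1, hw2⟩; push_neg; exact ⟨Ne.symm hw1, hw2⟩
    · intro h; push_neg at h; exact ⟨Ne.symm h.1, h.2⟩
  have hNb : H.neighborSet b = {b}ᶜ := by
    ext w
    simp only [hHdef, SimpleGraph.mem_neighborSet, SimpleGraph.deleteEdges_adj,
      SimpleGraph.top_adj, Set.mem_singleton_iff, Sym2.eq_iff, Set.mem_compl_iff]
    constructor
    · rintro ⟨hw1, -⟩; exact Ne.symm hw1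
    · intro h
      refine ⟨Ne.symm h, ?_⟩
      rintro (⟨rfl, rfl⟩ | ⟨rfl, rfl⟩)
      · exact hba rfl
      · exact hba' rfl
  set S : Set V := {v | τ v = true} \ {a, a'} with hSdef
  set R : Set V := {v | τ v = false} \ {b} with hRdef
  have haS : a ∉ S := by simp [hSdef]
  have ha'S : a' ∉ S := by simp [hSdef]
  have haR : a ∉ R := by simp [hRdef, ha]
  have ha'R : a' ∉ R := by simp [hRdef, ha']
  have hbS : b ∉ S := by simp [hSdef, hb]
  have hbR : b ∉ R := by simp [hRdef]
  have hb'R : b' ∈ R := by simp [hRdef, hb', (Ne.symm hbb' : ¬b' = b)]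
  have hdisj : Disjoint S R := by
    rw [Set.disjoint_left]
    rintro v ⟨hv, -⟩ ⟨hv', -⟩
    simp only [Set.mem_setOf_eq] at hv hv'
    simp [hv] at hv'
  have hSR : (S ∪ R).ncard = S.ncard + R.ncard := Set.ncard_union_eq hdisj
  have hRpos : 1 ≤ R.ncard := (Set.ncard_pos).mpr ⟨b', hb'R⟩
  have eqNa : ({a, a'}ᶜ : Set V) = insert b (S ∪ R) := by
    ext w
    simp only [Set.mem_compl_iff, Set.mem_insert_iff, Set.mem_singleton_iff,
      Set.mem_union, hSdef, hRdef, Set.mem_diff, Set.mem_setOf_eq]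
    constructor
    · intro h
      push_neg at h
      by_cases hw : w = b
      · exact Or.inl hw
      · cases hτw : τ w
        · exact Or.inr (Or.inr ⟨rfl, hw⟩)
        · exact Or.inr (Or.inl ⟨rfl, fun hc => hc.elim h.1 h.2⟩)
    · rintro (rfl | ⟨-, h⟩ | ⟨hw, -⟩)
      · push_neg; exact ⟨hba, hba'⟩
      · push_neg at h ⊢; exact h
      · push_neg
        constructor
        · rintro rfl; simp [ha] at hw
        · rintro rfl; simp [ha'] at hw
  have cNa : ({a, a'}ᶜ : Set V).ncard = S.ncard + R.ncard + 1 := by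
    rw [eqNa, Set.ncard_insert_of_notMem (by simp [hbS, hbR]), hSR]
  have eqNb : ({b}ᶜ : Set V) = insert a (insert a' (S ∪ R)) := by
    ext w
    simp only [Set.mem_compl_iff, Set.mem_insert_iff, Set.mem_singleton_iff,
      Set.mem_union, hSdef, hRdef, Set.mem_diff, Set.mem_setOf_eq]
    constructor
    · intro h
      by_cases hwa : w = a
      · exact Or.inl hwa
      · by_cases hwa' : w = a'
        · exact Or.inr (Or.inl hwa')
        · cases hτw : τ w
          · exact Or.inr (Or.inr (Or.inr ⟨rfl, h⟩))
          · exact Or.inr (Or.inr (Or.inl ⟨rfl, fun hc => hc.elim hwa hwa'⟩))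
    · rintro (rfl | rfl | ⟨hw, -⟩ | ⟨-, h⟩)
      · exact fun h => hba h.symm
      · exact fun h => hba' h.symm
      · rintro rfl; simp [hb] at hw
      · exact h
  have cNb : ({b}ᶜ : Set V).ncard = S.ncard + R.ncard + 2 := by
    rw [eqNb, Set.ncard_insert_of_notMem (by simp [haa', haS, haR]),
      Set.ncard_insert_of_notMem (by simp [ha'S, ha'R]), hSR]
  have hswa : swapAt τ a b a = false := by simp [swapAt, hb]
  have hswb : swapAt τ a b b = true := by simp [swapAt, hba, ha]
  have iNaT : ({a, a'}ᶜ : Set V) ∩ {w | τ w = τ a} = S := by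
    rw [ha, hSdef, Set.diff_eq, Set.inter_comm]
  have iNbF : ({b}ᶜ : Set V) ∩ {w | τ w = τ b} = R := by
    rw [hb, hRdef, Set.diff_eq, Set.inter_comm]
  have iNbT : ({b}ᶜ : Set V) ∩ {w | swapAt τ a b w = swapAt τ a b b} = insert a' S := by
    rw [hswb]
    ext w
    simp only [Set.mem_inter_iff, Set.mem_compl_iff, Set.mem_singleton_iff,
      Set.mem_setOf_eq, swapAt, Set.mem_insert_iff, hSdef, Set.mem_diff]
    constructor
    · rintro ⟨hwb, hw⟩
      by_cases hwa : w = a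
      · rw [if_pos hwa] at hw; simp [hb] at hw
      · rw [if_neg hwa, if_neg hwb] at hw
        by_cases hwa' : w = a'
        · exact Or.inl hwa'
        · exact Or.inr ⟨hw, fun hc => hc.elim hwa hwa'⟩
    · rintro (rfl | ⟨hw, hne⟩)
      · refine ⟨Ne.symm hba', ?_⟩
        rw [if_neg (Ne.symm haa'), if_neg (Ne.symm hba')]
        exact ha'
      · push_neg at hne
        have hwb : w ≠ b := by rintro rfl; simp [hb] at hw
        refine ⟨hwb, ?_⟩
        rw [if_neg hne.1, if_neg hwb]
        exact hw
  have iNaF : ({a, a'}ᶜ : Set V) ∩ {w | swapAt τ a b w = swapAt τ a b a} = R := by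
    rw [hswa]
    ext w
    simp only [Set.mem_inter_iff, Set.mem_compl_iff, Set.mem_insert_iff,
      Set.mem_singleton_iff, Set.mem_setOf_eq, swapAt, hRdef, Set.mem_diff]
    constructor
    · rintro ⟨hwaa', hw⟩
      push_neg at hwaa'
      rw [if_neg hwaa'.1] at hw
      by_cases hwb : w = b
      · rw [if_pos hwb] at hw; simp [ha] at hw
      · rw [if_neg hwb] at hw; exact ⟨hw, hwb⟩
    · rintro ⟨hw, hwb⟩
      have hwa : w ≠ a := by rintro rfl; simp [ha] at hw
      have hwa' : w ≠ a' := by rintro rfl; simp [ha'] at hw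
      refine ⟨?_, ?_⟩
      · push_neg; exact ⟨hwa, hwa'⟩
      · rw [if_neg hwa, if_neg hwb]; exact hw
  have hNaNe : H.neighborSet a ≠ ∅ := by
    rw [hNa, ← Set.nonempty_iff_ne_empty]
    exact ⟨b, by simp [hba, hba']⟩
  have hNbNe : H.neighborSet b ≠ ∅ := by
    rw [hNb, ← Set.nonempty_iff_ne_empty]
    exact ⟨a, by simp [(Ne.symm hba : ¬a = b)]⟩
  have uA : utility H τ a = (S.ncard : ℚ) / ((S.ncard + R.ncard + 1 : ℕ) : ℚ) := by
    rw [utility, if_neg hNaNe, hNa, iNaT, cNa]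
  have uB : utility H τ b = (R.ncard : ℚ) / ((S.ncard + R.ncard + 2 : ℕ) : ℚ) := by
    rw [utility, if_neg hNbNe, hNb, iNbF, cNb]
  have uB' : utility H (swapAt τ a b) b
      = ((S.ncard + 1 : ℕ) : ℚ) / ((S.ncard + R.ncard + 2 : ℕ) : ℚ) := by
    rw [utility, if_neg hNbNe, hNb, iNbT, cNb, Set.ncard_insert_of_notMem ha'S]
  have uA' : utility H (swapAt τ a b) a
      = (R.ncard : ℚ) / ((S.ncard + R.ncard + 1 : ℕ) : ℚ) := by
    rw [utility, if_neg hNaNe, hNa, iNaF, cNa]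
  refine ⟨by simp [ha, hb], ?_, ?_⟩
  · rw [uA, uB']
    rw [div_lt_div_iff₀ (by push_cast; positivity) (by push_cast; positivity)]
    push_cast
    nlinarith [(Nat.one_le_cast (α := ℚ)).mpr hRpos]
  · rw [uB, uA']
    apply div_lt_div_of_pos_left
    · have := (Nat.one_le_cast (α := ℚ)).mpr hRpos; push_cast at this ⊢; linarith
    · push_cast; positivity
    · push_cast; linarith
end

section
/- In a Schelling game on a cycle with |T1| ≥ 2 and |T2| ≥ 2, in every swap-equilibrium every agent is adjacent to at least one agent of its own type. -/
open SimpleGraph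

variable {V : Type*}

/-- The cycle graph on `Fin n` (vertices `0,…,n-1` in cyclic order). -/
def cycleG (n : ℕ) : SimpleGraph (Fin n) where
  Adj u v := u ≠ v ∧ ((u.val + 1) % n = v.val ∨ (v.val + 1) % n = u.val)
  symm := ⟨fun u v h => ⟨h.1.symm, h.2.symm⟩⟩
  loopless := ⟨fun u h => h.1 rfl⟩

open Fin.NatCast Fin.CommRing

section Aux

variable {n : ℕ} [NeZero n]

private lemma bool_eq_of_ne_ne : ∀ a b c : Bool, a ≠ c → b ≠ c → a = b := by decide

private lemma natCast_inj' {a b : ℕ} (ha : a < n) (hb : b < n) :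
    ((a : Fin n) = (b : Fin n)) ↔ a = b := by
  rw [Fin.ext_iff, Fin.val_natCast, Fin.val_natCast, Nat.mod_eq_of_lt ha, Nat.mod_eq_of_lt hb]

private lemma add_cast_ne (v : Fin n) {a b : ℕ} (ha : a < n) (hb : b < n)
    (h : a ≠ b) : v + (a : Fin n) ≠ v + (b : Fin n) := by
  intro hc
  exact h ((natCast_inj' ha hb).mp (add_left_cancel hc))

private lemma cast_n_sub_one (v : Fin n) : v + ((n - 1 : ℕ) : Fin n) = v - 1 := by
  have h1 : (1:ℕ) ≤ n := Nat.one_le_iff_ne_zero.mpr (NeZero.ne n)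
  rw [Nat.cast_sub h1, Fin.natCast_self, Nat.cast_one]
  ring

private lemma cast_zero' (v : Fin n) : v + ((0 : ℕ) : Fin n) = v := by
  rw [Nat.cast_zero, add_zero]

private lemma cast_one' (v : Fin n) : v + ((1 : ℕ) : Fin n) = v + 1 := by
  rw [Nat.cast_one]

private lemma cast_two' (v : Fin n) : v + ((2 : ℕ) : Fin n) = v + 2 := by
  rw [Nat.cast_ofNat]

lemma cycle_adj_iff (hn : 3 ≤ n) (u w : Fin n) :
    (cycleG n).Adj u w ↔ (w = u + 1 ∨ w = u - 1) := by
  have key : ∀ a : Fin n, (a + 1).val = (a.val + 1) % n := by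
    intro a
    rw [Fin.add_def, Fin.val_one' n, Nat.mod_eq_of_lt (by omega : 1 < n)]
  have hne1 : ∀ a : Fin n, a + 1 ≠ a := by
    intro a hc
    have h := congrArg Fin.val hc
    rw [key] at h
    have ha := a.isLt
    rcases Nat.lt_or_ge (a.val + 1) n with h' | h'
    · rw [Nat.mod_eq_of_lt h'] at h; omega
    · have he : a.val + 1 = n := by omega
      rw [he, Nat.mod_self] at h; omega
  constructor
  · rintro ⟨hne, h | h⟩
    · left; rw [Fin.ext_iff, key]; exact h.symm
    · right; rw [eq_sub_iff_add_eq, Fin.ext_iff, key]; exact h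
  · rintro (rfl | rfl)
    · exact ⟨fun h => hne1 u h.symm, Or.inl (key u).symm⟩
    · refine ⟨?_, Or.inr ?_⟩
      · intro hc
        exact hne1 (u - 1) (by rw [sub_add_cancel, ← hc])
      · rw [← key, sub_add_cancel]

lemma cycle_nbhd (hn : 3 ≤ n) (v : Fin n) :
    (cycleG n).neighborSet v = {v + 1, v - 1} := by
  ext w
  simp [neighborSet, cycle_adj_iff hn v w]

lemma utility_cycle (hn : 3 ≤ n) (τ : Fin n → Bool) (v : Fin n) :
    utility (cycleG n) τ v =
      ((if τ (v + 1) = τ v then 1 else 0) + (if τ (v - 1) = τ v then 1 else 0)) / 2 := by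
  have hne : v + 1 ≠ v - 1 := by
    have h := add_cast_ne v (a := 1) (b := n - 1) (by omega) (by omega) (by omega)
    rw [cast_one', cast_n_sub_one] at h
    exact h
  have hnbhd := cycle_nbhd hn v
  have hnonempty : (cycleG n).neighborSet v ≠ ∅ := by
    rw [hnbhd]; exact (Set.insert_nonempty _ _).ne_empty
  have hcard : ((cycleG n).neighborSet v).ncard = 2 := by
    rw [hnbhd]; exact Set.ncard_pair hne
  simp only [utility, hnonempty, if_false, hcard]
  rw [hnbhd]
  by_cases c1 : τ (v + 1) = τ v <;> by_cases c2 : τ (v - 1) = τ v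
  · have he : ({v+1, v-1} : Set (Fin n)) ∩ {w | τ w = τ v} = {v+1, v-1} := by
      ext w
      simp only [Set.mem_inter_iff, Set.mem_insert_iff, Set.mem_singleton_iff, Set.mem_setOf_eq]
      constructor
      · exact fun h => h.1
      · rintro (rfl | rfl) <;> simp [c1, c2]
    rw [he, Set.ncard_pair hne, if_pos c1, if_pos c2]; norm_num
  · have he : ({v+1, v-1} : Set (Fin n)) ∩ {w | τ w = τ v} = {v+1} := by
      ext w
      simp only [Set.mem_inter_iff, Set.mem_insert_iff, Set.mem_singleton_iff, Set.mem_setOf_eq]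
      constructor
      · rintro ⟨rfl | rfl, h⟩
        · rfl
        · exact absurd h c2
      · rintro rfl; simp [c1]
    rw [he, Set.ncard_singleton, if_pos c1, if_neg c2]; norm_num
  · have he : ({v+1, v-1} : Set (Fin n)) ∩ {w | τ w = τ v} = {v-1} := by
      ext w
      simp only [Set.mem_inter_iff, Set.mem_insert_iff, Set.mem_singleton_iff, Set.mem_setOf_eq]
      constructor
      · rintro ⟨rfl | rfl, h⟩
        · exact absurd h c1
        · rfl
      · rintro rfl; simp [c2]
    rw [he, Set.ncard_singleton, if_neg c1, if_pos c2]; norm_num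
  · have he : ({v+1, v-1} : Set (Fin n)) ∩ {w | τ w = τ v} = ∅ := by
      ext w
      simp only [Set.mem_inter_iff, Set.mem_insert_iff, Set.mem_singleton_iff, Set.mem_setOf_eq,
        Set.mem_empty_iff_false, iff_false, not_and]
      rintro (rfl | rfl)
      · exact c1
      · exact c2
    rw [he, Set.ncard_empty, if_neg c1, if_neg c2]; norm_num

end Aux


/-- On a cycle with at least two agents of each type, in every swap-equilibrium every
agent is adjacent to at least one agent of its own type. -/
theorem cycle_swapEq_adjacent_friend (n : ℕ) (τ : Fin n → Bool)
    (h1 : 2 ≤ {v : Fin n | τ v = true}.ncard)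
    (h2 : 2 ≤ {v : Fin n | τ v = false}.ncard)
    (heq : IsSwapEq (cycleG n) τ) :
    ∀ v : Fin n, ∃ w : Fin n, (cycleG n).Adj v w ∧ τ w = τ v := by
  classical
  have hn : 4 ≤ n := by
    have hd : Disjoint {v : Fin n | τ v = true} {v : Fin n | τ v = false} := by
      rw [Set.disjoint_left]; intro a ha hb; simp_all
    have hU := Set.ncard_le_ncard (Set.subset_univ
      ({v : Fin n | τ v = true} ∪ {v : Fin n | τ v = false})) Set.finite_univ
    rw [Set.ncard_univ, Nat.card_eq_fintype_card, Fintype.card_fin,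
      Set.ncard_union_eq hd (Set.toFinite _) (Set.toFinite _)] at hU
    omega
  haveI hnz : NeZero n := ⟨by omega⟩
  have hn3 : 3 ≤ n := by omega
  intro v
  by_contra hcon
  push_neg at hcon
  have hadj1 : (cycleG n).Adj v (v + 1) := (cycle_adj_iff hn3 v (v+1)).mpr (Or.inl rfl)
  have hadj2 : (cycleG n).Adj v (v - 1) := (cycle_adj_iff hn3 v (v-1)).mpr (Or.inr rfl)
  have hp : τ (v + 1) ≠ τ v := hcon _ hadj1
  have hm : τ (v - 1) ≠ τ v := hcon _ hadj2
  obtain ⟨u, hune, huty⟩ : ∃ u, u ≠ v ∧ τ u = τ v := by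
    have key : 1 < {w : Fin n | τ w = τ v}.ncard := by
      rcases Bool.eq_false_or_eq_true (τ v) with hb | hb <;> rw [hb] <;> omega
    obtain ⟨a, b, ha, hb', hab⟩ := (Set.one_lt_ncard_iff (Set.toFinite _)).mp key
    rcases eq_or_ne a v with rfl | h
    · exact ⟨b, hab.symm, hb'⟩
    · exact ⟨a, h, ha⟩
  have hS : ∃ k : ℕ, 0 < k ∧ k < n ∧ τ (v + (k : Fin n)) = τ v := by
    refine ⟨(u - v).val, ?_, (u - v).isLt, ?_⟩
    · rcases Nat.eq_zero_or_pos (u - v).val with h | h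
      · exact absurd (sub_eq_zero.mp (Fin.ext (by simpa using h))) hune
      · exact h
    · rw [Fin.cast_val_eq_self, add_sub_cancel]
      exact huty
  obtain ⟨m, hm0, hmn, hmty, hmin⟩ :
      ∃ m : ℕ, 0 < m ∧ m < n ∧ τ (v + (m : Fin n)) = τ v ∧
        ∀ k, k < m → ¬(0 < k ∧ k < n ∧ τ (v + (k : Fin n)) = τ v) :=
    ⟨Nat.find hS, (Nat.find_spec hS).1, (Nat.find_spec hS).2.1, (Nat.find_spec hS).2.2,
      fun k hk => Nat.find_min hS hk⟩
  have hm1 : m ≠ 1 := by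
    intro hc
    rw [hc, cast_one'] at hmty
    exact hp hmty
  have hmn1 : m ≠ n - 1 := by
    intro hc
    rw [hc, cast_n_sub_one] at hmty
    exact hm hmty
  have hm2 : 2 ≤ m := by omega
  have hmn2 : m ≤ n - 2 := by omega
  -- distinctness facts
  have d_v1_v : v + 1 ≠ v := by
    have h := add_cast_ne v (a := 1) (b := 0) (by omega) (by omega) (by omega)
    rwa [cast_one', cast_zero'] at h
  have d_vm1_v : v - 1 ≠ v := by
    have h := add_cast_ne v (a := n - 1) (b := 0) (by omega) (by omega) (by omega)
    rwa [cast_n_sub_one, cast_zero'] at h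
  have d_vm1_v1 : v - 1 ≠ v + 1 := by
    have h := add_cast_ne v (a := n - 1) (b := 1) (by omega) (by omega) (by omega)
    rwa [cast_n_sub_one, cast_one'] at h
  rcases eq_or_lt_of_le hm2 with hm2' | hm3
  · -- Case m = 2 : swap v and v + 1 is profitable
    have hv2 : τ (v + 2) = τ v := by
      rw [← hm2', cast_two'] at hmty
      exact hmty
    have d_v2_v : v + 2 ≠ v := by
      have h := add_cast_ne v (a := 2) (b := 0) (by omega) (by omega) (by omega)
      rwa [cast_two', cast_zero'] at h
    have d_v2_v1 : v + 2 ≠ v + 1 := by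
      have h := add_cast_ne v (a := 2) (b := 1) (by omega) (by omega) (by omega)
      rwa [cast_two', cast_one'] at h
    have sv : swapAt τ v (v+1) v = τ (v + 1) := by simp [swapAt]
    have sv1 : swapAt τ v (v+1) (v + 1) = τ v := by simp [swapAt, d_v1_v]
    have sv2 : swapAt τ v (v+1) (v + 2) = τ (v + 2) := by simp [swapAt, d_v2_v, d_v2_v1]
    have svm1 : swapAt τ v (v+1) (v - 1) = τ (v - 1) := by simp [swapAt, d_vm1_v, d_vm1_v1]
    have e1 : v + 1 + 1 = v + 2 := by ring
    have e2 : v + 1 - 1 = v := by ring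
    apply heq v (v + 1)
    refine ⟨fun h => hp h.symm, ?_, ?_⟩
    · rw [utility_cycle hn3, utility_cycle hn3, e1, e2, if_neg hp, if_neg hm]
      rw [sv1, sv2, sv, hv2, if_pos rfl, if_neg hp]
      norm_num
    · rw [utility_cycle hn3, utility_cycle hn3, e1, e2, sv, sv1, svm1]
      have c1 : τ (v + 2) ≠ τ (v + 1) := fun h => hp (hv2 ▸ h).symm
      have c2 : τ v ≠ τ (v + 1) := fun h => hp h.symm
      have c4 : τ (v - 1) = τ (v + 1) := bool_eq_of_ne_ne _ _ _ hm hp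
      rw [if_neg c1, if_neg c2, if_pos c4]
      norm_num
  · -- Case m ≥ 3 : swap v and j = v + (m-1) is profitable
    have hn5 : 5 ≤ n := by omega
    set j := v + ((m - 1 : ℕ) : Fin n) with hj
    have hjty : τ j ≠ τ v := by
      intro hc
      exact hmin (m - 1) (by omega) ⟨by omega, by omega, hc⟩
    have ej1 : j + 1 = v + ((m : ℕ) : Fin n) := by
      have hc : ((m - 1 : ℕ) : Fin n) + 1 = ((m : ℕ) : Fin n) := by
        rw [← Nat.cast_one (R := Fin n), ← Nat.cast_add]
        congr 1
        omega
      rw [hj, add_assoc, hc]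
    have d_j_v : j ≠ v := by
      have h := add_cast_ne v (a := m - 1) (b := 0) (by omega) (by omega) (by omega)
      rwa [cast_zero'] at h
    have d_v1_j : v + 1 ≠ j := by
      have h := add_cast_ne v (a := 1) (b := m - 1) (by omega) (by omega) (by omega)
      rwa [cast_one'] at h
    have d_vm1_j : v - 1 ≠ j := by
      have h := add_cast_ne v (a := n - 1) (b := m - 1) (by omega) (by omega) (by omega)
      rwa [cast_n_sub_one] at h
    have d_vm_v : v + ((m : ℕ) : Fin n) ≠ v := by
      have h := add_cast_ne v (a := m) (b := 0) (by omega) (by omega) (by omega)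
      rwa [cast_zero'] at h
    have d_vm_j : v + ((m : ℕ) : Fin n) ≠ j :=
      add_cast_ne v (a := m) (b := m - 1) (by omega) (by omega) (by omega)
    have sv : swapAt τ v j v = τ j := by simp [swapAt]
    have sj : swapAt τ v j j = τ v := by simp [swapAt, d_j_v]
    have sv1 : swapAt τ v j (v + 1) = τ (v + 1) := by simp [swapAt, d_v1_v, d_v1_j]
    have svm1 : swapAt τ v j (v - 1) = τ (v - 1) := by simp [swapAt, d_vm1_v, d_vm1_j]
    have svm : swapAt τ v j (v + ((m : ℕ) : Fin n)) = τ (v + ((m : ℕ) : Fin n)) := by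
      simp [swapAt, d_vm_v, d_vm_j]
    apply heq v j
    refine ⟨fun h => hjty h.symm, ?_, ?_⟩
    · rw [utility_cycle hn3, utility_cycle hn3, if_neg hp, if_neg hm, ej1, sj, svm,
        if_pos hmty]
      split <;> norm_num
    · have cjn : τ (v + ((m : ℕ) : Fin n)) ≠ τ j := fun h => hjty (h.symm.trans hmty)
      have c1 : τ (v + 1) = τ j := bool_eq_of_ne_ne _ _ _ hp hjty
      have c2 : τ (v - 1) = τ j := bool_eq_of_ne_ne _ _ _ hm hjty
      rw [utility_cycle hn3, utility_cycle hn3, ej1, sv, sv1, svm1, if_neg cjn,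
        if_pos c1, if_pos c2]
      split <;> norm_num
end

section
/- For a Schelling game on a path G with |T1| ≥ 4 and |T2| ≥ 2, the assignment v' in which the agents of T1 occupy the first |T1| vertices of the path and the agents of T2 occupy the remaining vertices is a swap-equilibrium, and moreover v' remains a swap-equilibrium on G − S for every subset S of edges and for every subset S of vertices (i.e., v' has edge-robustness |E(G)| and vertex-robustness |V(G)|). -/
open SimpleGraph

variable {V : Type*}

/-- The path graph on `Fin n` (vertices `0,…,n-1` with consecutive vertices adjacent). -/
def pathG (n : ℕ) : SimpleGraph (Fin n) where
  Adj u v := u.val + 1 = v.val ∨ v.val + 1 = u.val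
  symm := ⟨fun u v h => h.symm⟩
  loopless := ⟨by intro u h; rcases h with h | h <;> omega⟩

/-- Deleting a set `S` of vertices: remaining adjacency. -/
def delVerts (H : SimpleGraph V) (S : Set V) : SimpleGraph V where
  Adj u v := H.Adj u v ∧ u ∉ S ∧ v ∉ S
  symm := ⟨fun u v h => ⟨h.1.symm, h.2.2, h.2.1⟩⟩
  loopless := ⟨fun u h => h.1.ne rfl⟩

/-- Swap-equilibrium after deleting the vertices in `S` (agents on deleted vertices are
removed from the game and cannot take part in swaps). -/
def IsSwapEqDelVerts (H : SimpleGraph V) (τ : V → Bool) (S : Set V) : Prop :=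
  ∀ i ∉ S, ∀ j ∉ S, ¬ ProfitableSwap (delVerts H S) τ i j

lemma utility_le_one [Finite V] (H : SimpleGraph V) (τ : V → Bool) (v : V) :
    utility H τ v ≤ 1 := by
  unfold utility
  split
  · norm_num
  · apply div_le_one_of_le₀
    · exact_mod_cast Set.ncard_le_ncard Set.inter_subset_left (Set.toFinite _)
    · positivity

lemma utility_eq_zero_of_all_ne (H : SimpleGraph V) (τ : V → Bool) (v : V)
    (h : ∀ w ∈ H.neighborSet v, τ w ≠ τ v) : utility H τ v = 0 := by
  unfold utility
  split
  · rfl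
  · have : H.neighborSet v ∩ {w | τ w = τ v} = ∅ := by
      ext w
      simp only [Set.mem_inter_iff, Set.mem_setOf_eq, Set.mem_empty_iff_false, iff_false,
        not_and]
      exact h w
    rw [this]
    simp

lemma utility_eq_one [Finite V] (H : SimpleGraph V) (τ : V → Bool) (v : V)
    (hne : (H.neighborSet v).Nonempty) (h : ∀ w ∈ H.neighborSet v, τ w = τ v) :
    utility H τ v = 1 := by
  unfold utility
  split
  · rename_i he; rw [he] at hne; exact absurd hne (by simp)
  · have : H.neighborSet v ∩ {w | τ w = τ v} = H.neighborSet v := by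
      ext w
      simp only [Set.mem_inter_iff, Set.mem_setOf_eq, and_iff_left_iff_imp]
      exact h w
    rw [this]
    have hpos : 0 < (H.neighborSet v).ncard := (Set.ncard_pos (Set.toFinite _)).mpr hne
    rw [div_self]
    exact_mod_cast hpos.ne'

lemma utility_eq_zero_of_empty (H : SimpleGraph V) (τ : V → Bool) (v : V)
    (h : H.neighborSet v = ∅) : utility H τ v = 0 := by
  unfold utility
  simp [h]

lemma swapAt_left (τ : V → Bool) (i j : V) : swapAt τ i j i = τ j := by
  unfold swapAt; simp

lemma swapAt_right (τ : V → Bool) {i j : V} (h : i ≠ j) : swapAt τ i j j = τ i := by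
  unfold swapAt; simp [Ne.symm h]

lemma swapAt_other (τ : V → Bool) {i j v : V} (hi : v ≠ i) (hj : v ≠ j) :
    swapAt τ i j v = τ v := by
  unfold swapAt; simp [hi, hj]

lemma swapAt_comm (τ : V → Bool) (i j : V) : swapAt τ i j = swapAt τ j i := by
  funext v
  unfold swapAt
  by_cases hvi : v = i <;> by_cases hvj : v = j
  · subst hvi; subst hvj; simp
  · subst hvi; rw [if_pos rfl, if_neg hvj, if_pos rfl]
  · subst hvj; rw [if_neg hvi, if_pos rfl, if_pos rfl]
  · rw [if_neg hvi, if_neg hvj, if_neg hvj, if_neg hvi]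

lemma core (n t1 : ℕ) (τ : Fin n → Bool) (hτ : ∀ v : Fin n, τ v = decide (v.val < t1))
    (H : SimpleGraph (Fin n)) (hH : H ≤ pathG n) (i j : Fin n)
    (hi : i.val < t1) (hj : t1 ≤ j.val)
    (hA : utility H τ i < utility H (swapAt τ i j) j)
    (hB : utility H τ j < utility H (swapAt τ i j) i) : False := by
  have hij : i ≠ j := fun h => by rw [h] at hi; omega
  set σ := swapAt τ i j with hσ
  have hσi : σ i = false := by
    rw [hσ, swapAt_left, hτ]; simp; omega
  by_cases hall : ∀ w ∈ H.neighborSet i, σ w ≠ σ i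
  · have h0 := utility_eq_zero_of_all_ne H σ i hall
    rw [h0] at hB
    exact absurd hB (not_lt.mpr (utility_nonneg H τ j))
  · push_neg at hall
    obtain ⟨w, hw, hww⟩ := hall
    rw [hσi] at hww
    have hwi : w ≠ i := (H.ne_of_adj hw).symm
    have hwj : w ≠ j := by
      intro h
      rw [h, hσ, swapAt_right τ hij, hτ] at hww
      simp at hww; omega
    have hτw : τ w = false := by rw [hσ, swapAt_other τ hwi hwj] at hww; exact hww
    have hwval : t1 ≤ w.val := by rw [hτ] at hτw; simpa using hτw
    have hpath : i.val + 1 = w.val ∨ w.val + 1 = i.val := hH hw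
    have hwt1 : w.val = t1 := by omega
    have hjval : t1 < j.val := by
      rcases Nat.lt_or_ge t1 j.val with h | h
      · exact h
      · have : j = w := Fin.ext (by omega)
        exact absurd this.symm hwj
    have hsame : ∀ u ∈ H.neighborSet j, τ u = τ j := by
      intro u hu
      have hp : j.val + 1 = u.val ∨ u.val + 1 = j.val := hH hu
      rw [hτ, hτ]
      simp; omega
    by_cases hne : (H.neighborSet j).Nonempty
    · have h1 := utility_eq_one H τ j hne hsame
      rw [h1] at hB
      exact absurd (hB.trans_le (utility_le_one H σ i)) (lt_irrefl 1)
    · have hemp : H.neighborSet j = ∅ := Set.not_nonempty_iff_eq_empty.mp hne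
      have h0 : utility H σ j = 0 := utility_eq_zero_of_empty H σ j hemp
      rw [h0] at hA
      exact absurd hA (not_lt.mpr (utility_nonneg H τ i))

lemma mainEq (n t1 : ℕ) (τ : Fin n → Bool) (hτ : ∀ v : Fin n, τ v = decide (v.val < t1))
    (H : SimpleGraph (Fin n)) (hH : H ≤ pathG n) : IsSwapEq H τ := by
  rintro i j ⟨hd, hA, hB⟩
  cases hbi : τ i with
  | true =>
    have hbj : τ j = false := by
      cases h : τ j
      · rfl
      · rw [hbi, h] at hd; exact absurd rfl hd
    have hi : i.val < t1 := by rw [hτ] at hbi; exact of_decide_eq_true hbi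
    have hj : t1 ≤ j.val := by rw [hτ] at hbj; simpa using of_decide_eq_false hbj
    exact core n t1 τ hτ H hH i j hi hj hA hB
  | false =>
    have hbj : τ j = true := by
      cases h : τ j
      · rw [hbi, h] at hd; exact absurd rfl hd
      · rfl
    have hj : j.val < t1 := by rw [hτ] at hbj; exact of_decide_eq_true hbj
    have hi : t1 ≤ i.val := by rw [hτ] at hbi; simpa using of_decide_eq_false hbi
    rw [swapAt_comm] at hA hB
    exact core n t1 τ hτ H hH j i hj hi hB hA

/-- On a path with `|T1| ≥ 4` and `|T2| ≥ 2`, the assignment where the agents of `T1`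
occupy the first `|T1|` vertices and the agents of `T2` the remaining vertices is a
swap-equilibrium, and it remains one after deleting any subset of edges and any subset of
vertices (edge-robustness `|E(G)|`, vertex-robustness `|V(G)|`). -/
theorem path_segregated_fully_robust (n t1 t2 : ℕ)
    (hn : n = t1 + t2) (h1 : 4 ≤ t1) (h2 : 2 ≤ t2)
    (τ : Fin n → Bool) (hτ : ∀ v : Fin n, τ v = decide (v.val < t1)) :
    IsSwapEq (pathG n) τ ∧
    (∀ S : Set (Sym2 (Fin n)), IsSwapEq ((pathG n).deleteEdges S) τ) ∧
    (∀ S : Set (Fin n), IsSwapEqDelVerts (pathG n) τ S) := by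
  refine ⟨?_, ?_, ?_⟩
  · exact mainEq n t1 τ hτ _ le_rfl
  · intro S
    exact mainEq n t1 τ hτ _ (SimpleGraph.deleteEdges_le S)
  · intro S i _ j _
    exact mainEq n t1 τ hτ (delVerts (pathG n) S) (fun _ _ h => h.1) i j
end

section
/- Let G be an α-star-constellation graph and v an assignment in a Schelling game on G such that: (a) some degree-one vertex is occupied by an agent whose unique neighbor is occupied by an agent of the other type, and (b) for each type there exist two distinct agents of that type each adjacent to an agent of the other type (i.e., neither of the conditions of the equilibrium characterization holds). Then v is not a swap-equilibrium. -/
open SimpleGraph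

variable {V : Type*}

/-- Degree of a vertex (number of neighbors). -/
noncomputable def ndeg (H : SimpleGraph V) (v : V) : ℕ := (H.neighborSet v).ncard

/-- `G` is an `α`-star-constellation graph: connected, and every vertex of degree `> 1`
has at least `α` more degree-one neighbors than neighbors of degree `> 1`. -/
def IsStarConstellation (G : SimpleGraph V) (α : ℕ) : Prop :=
  G.Connected ∧ ∀ v : V, 1 < ndeg G v →
    {w ∈ G.neighborSet v | 1 < ndeg G w}.ncard + α ≤
      {w ∈ G.neighborSet v | ndeg G w = 1}.ncard

/-- On an `α`-star-constellation graph, if (a) some degree-one vertex is occupied by an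
agent whose unique neighbor is occupied by an agent of the other type, and (b) for each
type there are two distinct agents of that type each adjacent to an agent of the other
type, then the assignment is not a swap-equilibrium. -/
theorem starConstellation_not_swapEq [Fintype V] (G : SimpleGraph V) (α : ℕ)
    (τ : V → Bool) (hG : IsStarConstellation G α)
    (ha : ∃ v w : V, ndeg G v = 1 ∧ G.Adj v w ∧ τ w ≠ τ v)
    (hb : ∀ b : Bool, ∃ x x' : V, x ≠ x' ∧ τ x = b ∧ τ x' = b ∧
      (∃ y : V, G.Adj x y ∧ τ y ≠ b) ∧ (∃ y' : V, G.Adj x' y' ∧ τ y' ≠ b)) :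
    ¬ IsSwapEq G τ := by
  classical
  obtain ⟨v, w, hdv, hadj, hτ⟩ := ha
  -- pick an agent x of type τ w, x ≠ w, with a neighbor y of other type
  obtain ⟨x, y, hxw, hτx, hxy, hτy⟩ :
      ∃ x y, x ≠ w ∧ τ x = τ w ∧ G.Adj x y ∧ τ y ≠ τ w := by
    obtain ⟨x1, x2, hx12, hτ1, hτ2, ⟨y1, hy1, hτy1⟩, ⟨y2, hy2, hτy2⟩⟩ := hb (τ w)
    by_cases h : x1 = w
    · subst h
      exact ⟨x2, y2, fun e => hx12 e.symm, hτ2, hy2, hτy2⟩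
    · exact ⟨x1, y1, h, hτ1, hy1, hτy1⟩
  -- neighbor set of v is {w}
  have hNv : G.neighborSet v = {w} := by
    obtain ⟨a, ha'⟩ := Set.ncard_eq_one.mp hdv
    have hw : w ∈ G.neighborSet v := hadj
    rw [ha', Set.mem_singleton_iff] at hw
    rw [ha', hw]
  have hvw : v ≠ w := hadj.ne
  have hxv : x ≠ v := fun e => hτ (by rw [← hτx, e])
  have hyx : y ≠ x := fun e => hτy (by rw [← e] at hτx; exact hτx.symm ▸ (hτx ▸ rfl))
  have hyx' : y ≠ x := fun e => hτy (e ▸ hτx)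
  have hyv : y ≠ v := by
    intro e
    subst e
    have : x ∈ G.neighborSet y := hxy.symm
    rw [hNv] at this
    exact hxw this
  have hyN : y ∈ G.neighborSet x := hxy
  have hNx_ne : G.neighborSet x ≠ ∅ := fun e => (e ▸ hyN : y ∈ (∅ : Set V))
  have hNx_fin : (G.neighborSet x).Finite := Set.toFinite _
  have hNx_pos : 0 < (G.neighborSet x).ncard :=
    (Set.ncard_pos hNx_fin).mpr ⟨y, hyN⟩
  -- swapAt values
  have hs_v : swapAt τ v x v = τ x := by simp [swapAt]
  have hs_x : swapAt τ v x x = τ v := by simp [swapAt, hxv]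
  have hs_w : swapAt τ v x w = τ w := by simp [swapAt, hvw.symm, Ne.symm hxw]
  have hs_y : swapAt τ v x y = τ y := by simp [swapAt, hyv, hyx']
  -- τ y = τ v (both differ from τ w, Bool)
  have hτyv : τ y = τ v := by
    cases hv' : τ v <;> cases hy' : τ y <;> cases hw' : τ w <;> simp_all
  -- utility computations
  have u1 : utility G τ v = 0 := by
    unfold utility
    rw [if_neg (by rw [hNv]; exact Set.singleton_ne_empty w), hNv]
    have : ({w} : Set V) ∩ {u | τ u = τ v} = ∅ :=
      Set.singleton_inter_eq_empty.mpr (fun h => hτ h)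
    rw [this]
    simp
  have u2 : utility G (swapAt τ v x) v = 1 := by
    unfold utility
    rw [if_neg (by rw [hNv]; exact Set.singleton_ne_empty w), hNv]
    have : ({w} : Set V) ∩ {u | swapAt τ v x u = swapAt τ v x v} = {w} := by
      apply Set.inter_eq_left.mpr
      intro u hu
      rw [Set.mem_singleton_iff] at hu
      show swapAt τ v x u = swapAt τ v x v
      rw [hu, hs_w, hs_v, hτx]
    rw [this]
    simp
  have u3 : utility G τ x < 1 := by
    unfold utility
    rw [if_neg hNx_ne]
    rw [div_lt_one (by exact_mod_cast hNx_pos)]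
    have hsub : G.neighborSet x ∩ {u | τ u = τ x} ⊂ G.neighborSet x := by
      constructor
      · exact Set.inter_subset_left
      · intro hsup
        have : y ∈ G.neighborSet x ∩ {u | τ u = τ x} := hsup hyN
        exact hτy (hτx ▸ this.2)
    exact_mod_cast Set.ncard_lt_ncard hsub hNx_fin
  have u4 : 0 < utility G (swapAt τ v x) x := by
    unfold utility
    rw [if_neg hNx_ne]
    apply div_pos _ (by exact_mod_cast hNx_pos)
    have hy' : y ∈ G.neighborSet x ∩ {u | swapAt τ v x u = swapAt τ v x x} := by
      refine ⟨hyN, ?_⟩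
      show swapAt τ v x y = swapAt τ v x x
      rw [hs_y, hs_x, hτyv]
    have : 0 < (G.neighborSet x ∩ {u | swapAt τ v x u = swapAt τ v x x}).ncard :=
      (Set.ncard_pos (Set.toFinite _)).mpr ⟨y, hy'⟩
    exact_mod_cast this
  intro hEq
  exact hEq v x ⟨fun e => hτ (e ▸ hτx.symm ▸ rfl), u1 ▸ u4, u2 ▸ u3⟩
end
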